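/- arXiv:2407.05144 — 2 statements merged into one kernel-verified Lean document; each statement's English description precedes it below -/
import Mathlib

section
/- Let E ⊆ ℝ be Lebesgue measurable, define ρ : ℝ → ℝ by ρ(t) := sgn(t)·leb(E ∩ [min(0,t), max(0,t)]), and let ζ(s) := inf{ t ∈ ℝ : ρ(t) > s } be the right-continuous inverse of ρ on the interior of the range of ρ. Then the pushforward of Lebesgue measure on (inf ρ, sup ρ) under ζ equals the measure 𝟙_E · leb, i.e. for every Borel set A, leb({ s ∈ (inf ρ, sup ρ) : ζ(s) ∈ A }) = leb(E ∩ A). -/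
open MeasureTheory

/-- With `ρ(t) := sgn(t)·leb(E ∩ [0 ∧ t, 0 ∨ t])` and right-continuous inverse
`ζ(s) := inf{t : ρ(t) > s}`, the pushforward of Lebesgue measure on `(inf ρ, sup ρ)` under `ζ`
equals `𝟙_E·leb`: for every Borel `A`,
`leb({s ∈ (inf ρ, sup ρ) : ζ(s) ∈ A}) = leb(E ∩ A)`. -/
theorem stmt_8 (E : Set ℝ) (hE : MeasurableSet E)
    (ρ : ℝ → ℝ) (hρ : ∀ t, ρ t = Real.sign t * (volume (E ∩ Set.uIcc 0 t)).toReal)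
    (ζ : ℝ → ℝ) (hζ : ∀ s, ζ s = sInf {t : ℝ | s < ρ t}) :
    ∀ A : Set ℝ, MeasurableSet A →
      volume {s : ℝ | (∃ t₁, ρ t₁ < s) ∧ (∃ t₂, s < ρ t₂) ∧ ζ s ∈ A} = volume (E ∩ A) := by
  classical
  -- the signed "mass" function
  set m : ℝ → ℝ → ℝ := fun u v => (volume (E ∩ Set.Ioc u v)).toReal with hm
  have fin : ∀ u v : ℝ, volume (E ∩ Set.Ioc u v) ≠ ⊤ := by
    intro u v
    refine ne_top_of_le_ne_top ?_ (measure_mono Set.inter_subset_right)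
    simp [Real.volume_Ioc]
  have mnonneg : ∀ u v : ℝ, 0 ≤ m u v := fun u v => ENNReal.toReal_nonneg
  have madd : ∀ u v w : ℝ, u ≤ v → v ≤ w → m u v + m v w = m u w := by
    intro u v w huv hvw
    have hU : E ∩ Set.Ioc u w = (E ∩ Set.Ioc u v) ∪ (E ∩ Set.Ioc v w) := by
      rw [← Set.inter_union_distrib_left, Set.Ioc_union_Ioc_eq_Ioc huv hvw]
    have hvol : volume (E ∩ Set.Ioc u w)
        = volume (E ∩ Set.Ioc u v) + volume (E ∩ Set.Ioc v w) := by
      rw [hU, measure_union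
        ((Set.Ioc_disjoint_Ioc_of_le le_rfl).mono Set.inter_subset_right Set.inter_subset_right)
        (hE.inter measurableSet_Ioc)]
    simp only [hm]
    rw [hvol, ENNReal.toReal_add (fin u v) (fin v w)]
  have micc : ∀ u v : ℝ, volume (E ∩ Set.Icc u v) = volume (E ∩ Set.Ioc u v) := by
    intro u v
    refine le_antisymm ?_ (measure_mono (Set.inter_subset_inter_right _ Set.Ioc_subset_Icc_self))
    calc volume (E ∩ Set.Icc u v) ≤ volume ((E ∩ Set.Ioc u v) ∪ {u}) := by
          refine measure_mono ?_
          rintro x ⟨hxE, hx1, hx2⟩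
          rcases eq_or_lt_of_le hx1 with h | h
          · exact Or.inr (by simp [h.symm])
          · exact Or.inl ⟨hxE, h, hx2⟩
      _ ≤ volume (E ∩ Set.Ioc u v) + volume ({u} : Set ℝ) := measure_union_le _ _
      _ = volume (E ∩ Set.Ioc u v) := by simp
  have rho_pos : ∀ t : ℝ, 0 ≤ t → ρ t = m 0 t := by
    intro t ht
    rcases eq_or_lt_of_le ht with h | h
    · rw [← h, hρ]
      simp [Real.sign_zero, hm]
    · rw [hρ, Real.sign_of_pos h, one_mul, Set.uIcc_of_le ht]
      simp only [hm]
      rw [micc]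
  have rho_neg : ∀ t : ℝ, t ≤ 0 → ρ t = -(m t 0) := by
    intro t ht
    rcases eq_or_lt_of_le ht with h | h
    · rw [h, hρ]
      simp [Real.sign_zero, hm]
    · rw [hρ, Real.sign_of_neg h, Set.uIcc_of_ge ht]
      simp only [hm]
      rw [micc]
      ring
  have key : ∀ s t : ℝ, s ≤ t → ρ t - ρ s = m s t := by
    intro s t hst
    rcases le_or_gt 0 s with hs | hs
    · have h1 := madd 0 s t hs hst
      rw [rho_pos s hs, rho_pos t (hs.trans hst)]
      linarith
    · rcases le_or_gt t 0 with ht | ht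
      · have h1 := madd s t 0 hst ht
        rw [rho_neg s hs.le, rho_neg t ht]
        linarith
      · have h1 := madd s 0 t hs.le ht.le
        rw [rho_neg s hs.le, rho_pos t ht.le]
        linarith
  have rho_mono : Monotone ρ := by
    intro s t hst
    have h1 := key s t hst
    have h2 := mnonneg s t
    linarith
  have lip : ∀ s t : ℝ, s ≤ t → ρ t - ρ s ≤ t - s := by
    intro s t hst
    rw [key s t hst]
    have h1 : volume (E ∩ Set.Ioc s t) ≤ ENNReal.ofReal (t - s) := by
      rw [← Real.volume_Ioc]
      exact measure_mono Set.inter_subset_right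
    calc m s t ≤ (ENNReal.ofReal (t - s)).toReal :=
          ENNReal.toReal_mono ENNReal.ofReal_ne_top h1
      _ = t - s := ENNReal.toReal_ofReal (by linarith)
  -- the domain set S
  set S : Set ℝ := {s : ℝ | (∃ t₁, ρ t₁ < s) ∧ (∃ t₂, s < ρ t₂)} with hSdef
  have hSmeas : MeasurableSet S := by
    have hoc : S.OrdConnected := by
      constructor
      rintro x ⟨⟨t₁, h₁⟩, _⟩ y ⟨_, ⟨t₂, h₂⟩⟩ z hz
      exact ⟨⟨t₁, lt_of_lt_of_le h₁ hz.1⟩, ⟨t₂, lt_of_le_of_lt hz.2 h₂⟩⟩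
    exact hoc.measurableSet
  -- basic facts about the sets {t | s < ρ t}
  have hbdd : ∀ s : ℝ, (∃ t₁, ρ t₁ < s) → BddBelow {t : ℝ | s < ρ t} := by
    rintro s ⟨t₁, h₁⟩
    refine ⟨t₁, fun t ht => ?_⟩
    by_contra hc
    push_neg at hc
    exact absurd (rho_mono hc.le) (by simp only [Set.mem_setOf_eq] at ht; linarith)
  -- ζ s ≤ b → s ≤ ρ b  (for s ∈ S)
  have claim1 : ∀ s : ℝ, s ∈ S → ∀ b : ℝ, ζ s ≤ b → s ≤ ρ b := by
    rintro s ⟨h₁, t₂, h₂⟩ b hb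
    by_contra hc
    push_neg at hc
    set ε : ℝ := (s - ρ b) / 2 with hε
    have hεpos : 0 < ε := by simp only [hε]; linarith
    have hlt : sInf {t : ℝ | s < ρ t} < b + ε := by
      rw [← hζ s]; linarith
    obtain ⟨t, ht, htlt⟩ := (csInf_lt_iff (hbdd s h₁) ⟨t₂, h₂⟩).mp hlt
    have h3 : ρ t ≤ ρ (b + ε) := rho_mono htlt.le
    have h4 : ρ (b + ε) - ρ b ≤ ε := by
      have := lip b (b + ε) (by linarith)
      linarith
    simp only [Set.mem_setOf_eq] at ht
    simp only [hε] at h4 ht h3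
    linarith
  -- ρ a < s → a < ζ s  (when {t | s < ρ t} is nonempty)
  have claim2 : ∀ s a : ℝ, (∃ t₂, s < ρ t₂) → ρ a < s → a < ζ s := by
    rintro s a ⟨t₂, h₂⟩ ha
    set δ : ℝ := (s - ρ a) / 2 with hδ
    have hδpos : 0 < δ := by simp only [hδ]; linarith
    have h1 : ρ (a + δ) < s := by
      have := lip a (a + δ) (by linarith)
      simp only [hδ] at this ⊢
      linarith
    have h2 : a + δ ≤ sInf {t : ℝ | s < ρ t} := by
      refine le_csInf ⟨t₂, h₂⟩ ?_
      intro t ht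
      simp only [Set.mem_setOf_eq] at ht
      by_contra hc
      push_neg at hc
      have := rho_mono hc.le
      linarith
    rw [hζ s]
    linarith
  -- s < ρ b → ζ s ≤ b  (when bounded below)
  have claim3 : ∀ s b : ℝ, (∃ t₁, ρ t₁ < s) → s < ρ b → ζ s ≤ b := by
    intro s b h₁ hb
    rw [hζ s]
    exact csInf_le (hbdd s h₁) hb
  -- ζ s < c ↔ s < ρ c for s ∈ S
  have claim4 : ∀ s : ℝ, s ∈ S → ∀ c : ℝ, (ζ s < c ↔ s < ρ c) := by
    rintro s ⟨h₁, t₂, h₂⟩ c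
    constructor
    · intro h
      rw [hζ s] at h
      obtain ⟨t, ht, htlt⟩ := (csInf_lt_iff (hbdd s h₁) ⟨t₂, h₂⟩).mp h
      simp only [Set.mem_setOf_eq] at ht
      exact lt_of_lt_of_le ht (rho_mono htlt.le)
    · intro h
      set δ : ℝ := (ρ c - s) / 2 with hδ
      have hδpos : 0 < δ := by simp only [hδ]; linarith
      have h1 : s < ρ (c - δ) := by
        have := lip (c - δ) c (by linarith)
        simp only [hδ] at this ⊢
        linarith
      have h2 : ζ s ≤ c - δ := claim3 s (c - δ) h₁ h1
      linarith
  -- the measurable modification of ζ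
  set g : ℝ → ℝ := fun s => if s ∈ S then ζ s else 0 with hgdef
  have hg : Measurable g := by
    apply measurable_of_Iio
    intro c
    have hpre : g ⁻¹' Set.Iio c =
        (S ∩ Set.Iio (ρ c)) ∪ (Sᶜ ∩ {s : ℝ | (0:ℝ) < c}) := by
      ext s
      by_cases hsS : s ∈ S
      · simp only [Set.mem_preimage, Set.mem_Iio, hgdef, if_pos hsS, Set.mem_union,
          Set.mem_inter_iff, Set.mem_compl_iff, hsS, not_true, false_and, or_false, true_and]
        exact claim4 s hsS c
      · simp only [Set.mem_preimage, Set.mem_Iio, hgdef, if_neg hsS, Set.mem_union,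
          Set.mem_inter_iff, Set.mem_compl_iff, hsS, false_and, false_or, not_false_iff,
          true_and, Set.mem_setOf_eq, if_false]
    rw [hpre]
    have h2 : MeasurableSet {s : ℝ | (0:ℝ) < c} := by
      by_cases h : (0:ℝ) < c
      · convert MeasurableSet.univ
        simp [h, Set.eq_univ_iff_forall]
      · convert MeasurableSet.empty
        simp [Set.eq_empty_iff_forall_notMem, h]
    exact ((hSmeas.inter measurableSet_Iio).union (hSmeas.compl.inter h2))
  -- value of the pushforward on Ioc intervals
  have hval : ∀ a b : ℝ, a < b →
      Measure.map g (volume.restrict S) (Set.Ioc a b) = ENNReal.ofReal (ρ b - ρ a) := by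
    intro a b hab
    rw [Measure.map_apply hg measurableSet_Ioc,
      Measure.restrict_apply (hg measurableSet_Ioc)]
    have hsub1 : Set.Ioo (ρ a) (ρ b) ⊆ g ⁻¹' (Set.Ioc a b) ∩ S := by
      rintro s ⟨hs1, hs2⟩
      have hsS : s ∈ S := ⟨⟨a, hs1⟩, ⟨b, hs2⟩⟩
      refine ⟨?_, hsS⟩
      simp only [Set.mem_preimage, hgdef, if_pos hsS, Set.mem_Ioc]
      exact ⟨claim2 s a ⟨b, hs2⟩ hs1, claim3 s b ⟨a, hs1⟩ hs2⟩
    have hsub2 : g ⁻¹' (Set.Ioc a b) ∩ S ⊆ Set.Icc (ρ a) (ρ b) := by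
      rintro s ⟨hsg, hsS⟩
      simp only [Set.mem_preimage, hgdef, if_pos hsS, Set.mem_Ioc] at hsg
      obtain ⟨hga, hgb⟩ := hsg
      refine ⟨?_, claim1 s hsS b hgb⟩
      by_contra hc
      push_neg at hc
      have := claim3 s a hsS.1 hc
      linarith
    refine le_antisymm ?_ ?_
    · calc volume (g ⁻¹' (Set.Ioc a b) ∩ S) ≤ volume (Set.Icc (ρ a) (ρ b)) :=
            measure_mono hsub2
        _ = ENNReal.ofReal (ρ b - ρ a) := Real.volume_Icc
    · calc ENNReal.ofReal (ρ b - ρ a) = volume (Set.Ioo (ρ a) (ρ b)) := Real.volume_Ioo.symm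
        _ ≤ volume (g ⁻¹' (Set.Ioc a b) ∩ S) := measure_mono hsub1
  -- the two measures agree
  have hmap : Measure.map g (volume.restrict S) = volume.restrict E := by
    refine Measure.ext_of_Ioc' _ _ (fun a b hab => ?_) (fun a b hab => ?_)
    · rw [hval a b hab]; exact ENNReal.ofReal_ne_top
    · rw [hval a b hab, Measure.restrict_apply measurableSet_Ioc, Set.inter_comm,
        key a b hab.le]
      simp only [hm]
      rw [ENNReal.ofReal_toReal (fin a b)]
  -- conclude
  intro A hA
  have hset : {s : ℝ | (∃ t₁, ρ t₁ < s) ∧ (∃ t₂, s < ρ t₂) ∧ ζ s ∈ A}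
      = g ⁻¹' A ∩ S := by
    ext s
    simp only [Set.mem_setOf_eq, Set.mem_inter_iff, Set.mem_preimage]
    constructor
    · rintro ⟨h₁, h₂, h₃⟩
      have hsS : s ∈ S := ⟨h₁, h₂⟩
      exact ⟨by simp only [hgdef, if_pos hsS]; exact h₃, hsS⟩
    · rintro ⟨hgA, hsS⟩
      simp only [hgdef, if_pos hsS] at hgA
      exact ⟨hsS.1, hsS.2, hgA⟩
  rw [hset, ← Measure.restrict_apply (hg hA), ← Measure.map_apply hg hA, hmap,
    Measure.restrict_apply hA, Set.inter_comm]
end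

section
/- Let Φ : (0,∞) → (0,∞) be given by Φ(λ) = ∫₀^∞ e^{−λx} Π̄(x) dx, where Π̄ : (0,∞) → [0,∞) is nonincreasing and satisfies liminf_{x↓0} Π̄(x)·x·(log(1/x))³ > 0. Then liminf_{λ→∞} (log λ)² · Φ(λ)/λ > 0. -/
open MeasureTheory Filter

lemma aux_deriv_stmt9 {x : ℝ} (hx0 : 0 < x) (hx1 : x < 1) :
    HasDerivAt (fun y => (2 * (Real.log y) ^ 2)⁻¹) ((x * (Real.log (1 / x)) ^ 3)⁻¹) x := by
  have hlx : Real.log x < 0 := Real.log_neg hx0 hx1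
  have h1 : HasDerivAt (fun y => 2 * (Real.log y) ^ 2)
      (2 * (2 * Real.log x ^ 1 * x⁻¹)) x :=
    ((Real.hasDerivAt_log hx0.ne').pow 2).const_mul 2
  have hne : 2 * Real.log x ^ 2 ≠ 0 := mul_ne_zero two_ne_zero (pow_ne_zero 2 hlx.ne)
  have h2 : HasDerivAt (fun y => (2 * (Real.log y) ^ 2)⁻¹) _ x := h1.inv hne
  convert h2 using 1
  rw [one_div, Real.log_inv]
  field_simp [hx0.ne', hlx.ne]

/-- If `Π̄ : (0,∞) → [0,∞)` is nonincreasing with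
`liminf_{x↓0} Π̄(x)·x·(log(1/x))³ > 0`, and `Φ` is such that
`Φ(λ)/λ = ∫₀^∞ e^{−λx} Π̄(x) dx`, then `liminf_{λ→∞} (log λ)² Φ(λ)/λ > 0`. -/
theorem stmt_9 (Pibar : ℝ → ℝ) (hnn : ∀ x, 0 < x → 0 ≤ Pibar x)
    (hmono : ∀ x y, 0 < x → x ≤ y → Pibar y ≤ Pibar x)
    (htail : ∃ c > (0:ℝ), ∀ᶠ x in nhdsWithin 0 (Set.Ioi 0),
      c ≤ Pibar x * x * (Real.log (1 / x)) ^ 3)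
    (Φ : ℝ → ℝ) (hΦpos : ∀ l, 0 < l → 0 < Φ l)
    (hΦ : ∀ l, 0 < l → Φ l / l = ∫ x in Set.Ioi (0:ℝ), Real.exp (-l * x) * Pibar x) :
    ∃ c > (0:ℝ), ∀ᶠ l in atTop, c ≤ (Real.log l) ^ 2 * (Φ l / l) := by
  obtain ⟨c, hc, hev⟩ := htail
  rw [eventually_nhdsWithin_iff, Metric.eventually_nhds_iff] at hev
  obtain ⟨δ, hδ, H⟩ := hev
  refine ⟨3 * Real.exp (-1) * c / 8, by positivity, ?_⟩
  filter_upwards [eventually_gt_atTop (max 3 (1/δ))] with l hl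
  have hl3 : (3:ℝ) < l := lt_of_le_of_lt (le_max_left _ _) hl
  have hlδ : 1/δ < l := lt_of_le_of_lt (le_max_right _ _) hl
  have hl0 : (0:ℝ) < l := by linarith
  have hbδ : 1 / l < δ := by
    rw [div_lt_iff₀ hl0]
    rw [div_lt_iff₀ hδ] at hlδ
    nlinarith
  have hlogl : 1 < Real.log l :=
    (Real.lt_log_iff_exp_lt hl0).mpr (by nlinarith [Real.exp_one_lt_d9])
  set a : ℝ := 1 / l ^ 2 with ha_def
  set b : ℝ := 1 / l with hb_def
  have ha0 : 0 < a := by positivity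
  have hab : a ≤ b := by
    apply one_div_le_one_div_of_le hl0
    nlinarith
  have hb1 : b < 1 := by rw [hb_def, div_lt_one hl0]; linarith
  -- integrability of the integrand
  have hpos : (0:ℝ) < Φ l / l := div_pos (hΦpos l hl0) hl0
  have hΦl := hΦ l hl0
  have hInt : IntegrableOn (fun x => Real.exp (-l * x) * Pibar x) (Set.Ioi 0) := by
    by_contra h
    rw [hΦl, integral_undef h] at hpos
    exact lt_irrefl 0 hpos
  -- basic facts about points in [a,b]
  have hmem : ∀ x ∈ Set.Icc a b, 0 < x ∧ x < 1 ∧ x < δ := by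
    intro x hx
    exact ⟨lt_of_lt_of_le ha0 hx.1, lt_of_le_of_lt hx.2 hb1, lt_of_le_of_lt hx.2 hbδ⟩
  -- continuity / integrability of the comparison function G
  have hGcont : ContinuousOn (fun x : ℝ => (x * (Real.log (1 / x)) ^ 3)⁻¹) (Set.uIcc a b) := by
    rw [Set.uIcc_of_le hab]
    intro x hx
    obtain ⟨hx0, hx1, -⟩ := hmem x hx
    have hlog : 0 < Real.log (1 / x) := Real.log_pos (one_lt_one_div hx0 hx1)
    have hne : x * (Real.log (1 / x)) ^ 3 ≠ 0 := by positivity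
    apply ContinuousAt.continuousWithinAt
    have h1 : ContinuousAt (fun y : ℝ => 1 / y) x := continuousAt_const.div continuousAt_id hx0.ne'
    have h2 : ContinuousAt (fun y : ℝ => Real.log (1 / y)) x :=
      (Real.continuousAt_log (by positivity)).comp h1
    exact (continuousAt_id.mul (h2.pow 3)).inv₀ hne
  have hGint : IntervalIntegrable (fun x : ℝ => (x * (Real.log (1 / x)) ^ 3)⁻¹) volume a b :=
    hGcont.intervalIntegrable
  -- FTC
  have hFsub : ∫ x in a..b, (x * (Real.log (1 / x)) ^ 3)⁻¹
      = (fun y : ℝ => (2 * (Real.log y) ^ 2)⁻¹) b - (fun y : ℝ => (2 * (Real.log y) ^ 2)⁻¹) a := by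
    refine intervalIntegral.integral_eq_sub_of_hasDerivAt
      (f := fun y : ℝ => (2 * (Real.log y) ^ 2)⁻¹) (fun x hx => ?_) hGint
    rw [Set.uIcc_of_le hab] at hx
    obtain ⟨hx0, hx1, -⟩ := hmem x hx
    exact aux_deriv_stmt9 hx0 hx1
  have hloga : Real.log a = -(2 * Real.log l) := by
    rw [ha_def, one_div, Real.log_inv, Real.log_pow]; push_cast; ring
  have hlogb : Real.log b = -Real.log l := by
    rw [hb_def, one_div, Real.log_inv]
  have hL0 : (0:ℝ) < Real.log l := by linarith
  have hFval : ∫ x in a..b, (x * (Real.log (1 / x)) ^ 3)⁻¹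
      = 3 / (8 * (Real.log l) ^ 2) := by
    rw [hFsub]
    simp only
    rw [hloga, hlogb]
    have : Real.log l ≠ 0 := hL0.ne'
    field_simp
    ring
  -- pointwise comparison
  have hpt : ∀ x ∈ Set.Icc a b,
      Real.exp (-1) * c * (x * (Real.log (1 / x)) ^ 3)⁻¹ ≤ Real.exp (-l * x) * Pibar x := by
    intro x hx
    obtain ⟨hx0, hx1, hxδ⟩ := hmem x hx
    have hlog : 0 < Real.log (1 / x) := Real.log_pos (one_lt_one_div hx0 hx1)
    have hden : 0 < x * (Real.log (1 / x)) ^ 3 := by positivity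
    have hP : c ≤ Pibar x * x * (Real.log (1 / x)) ^ 3 :=
      H (show dist x 0 < δ by rw [Real.dist_eq, sub_zero, abs_of_pos hx0]; exact hxδ)
        (Set.mem_Ioi.mpr hx0)
    have hPb : c * (x * (Real.log (1 / x)) ^ 3)⁻¹ ≤ Pibar x := by
      rw [← div_eq_mul_inv, div_le_iff₀ hden]
      nlinarith
    have hexp : Real.exp (-1) ≤ Real.exp (-l * x) := by
      apply Real.exp_le_exp.mpr
      have hxb : x ≤ 1 / l := hx.2
      have h1 : l * (1 / l) = 1 := by field_simp
      have : l * x ≤ 1 := by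
        nlinarith [mul_le_mul_of_nonneg_left hxb hl0.le]
      linarith
    calc Real.exp (-1) * c * (x * (Real.log (1 / x)) ^ 3)⁻¹
        = Real.exp (-1) * (c * (x * (Real.log (1 / x)) ^ 3)⁻¹) := by ring
      _ ≤ Real.exp (-l * x) * Pibar x :=
          mul_le_mul hexp hPb (by positivity) (Real.exp_pos _).le
  -- interval integral comparison
  have hfInt : IntervalIntegrable (fun x => Real.exp (-l * x) * Pibar x) volume a b := by
    rw [intervalIntegrable_iff_integrableOn_Ioc_of_le hab]
    exact hInt.mono_set (fun x hx => lt_of_lt_of_le ha0 hx.1.le)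
  have hcomp : ∫ x in a..b, Real.exp (-1) * c * (x * (Real.log (1 / x)) ^ 3)⁻¹
      ≤ ∫ x in a..b, Real.exp (-l * x) * Pibar x :=
    intervalIntegral.integral_mono_on hab (hGint.const_mul _) hfInt hpt
  have hconstmul : ∫ x in a..b, Real.exp (-1) * c * (x * (Real.log (1 / x)) ^ 3)⁻¹
      = Real.exp (-1) * c * (3 / (8 * (Real.log l) ^ 2)) := by
    rw [intervalIntegral.integral_const_mul, hFval]
  -- set integral monotonicity
  have hsub : Set.Ioc a b ⊆ Set.Ioi (0:ℝ) := fun x hx => lt_of_lt_of_le ha0 hx.1.le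
  have hnonneg : 0 ≤ᵐ[volume.restrict (Set.Ioi (0:ℝ))] fun x => Real.exp (-l * x) * Pibar x := by
    rw [EventuallyLE, ae_restrict_iff' measurableSet_Ioi]
    exact ae_of_all _ fun x hx => mul_nonneg (Real.exp_pos _).le (hnn x hx)
  have hmono2 : ∫ x in Set.Ioc a b, Real.exp (-l * x) * Pibar x
      ≤ ∫ x in Set.Ioi (0:ℝ), Real.exp (-l * x) * Pibar x :=
    setIntegral_mono_set hInt hnonneg (HasSubset.Subset.eventuallyLE hsub)
  have hIocInterval : ∫ x in a..b, Real.exp (-l * x) * Pibar x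
      = ∫ x in Set.Ioc a b, Real.exp (-l * x) * Pibar x :=
    intervalIntegral.integral_of_le hab
  have hfinal : Real.exp (-1) * c * (3 / (8 * (Real.log l) ^ 2)) ≤ Φ l / l := by
    rw [hΦl]
    calc Real.exp (-1) * c * (3 / (8 * (Real.log l) ^ 2))
        = ∫ x in a..b, Real.exp (-1) * c * (x * (Real.log (1 / x)) ^ 3)⁻¹ := hconstmul.symm
      _ ≤ ∫ x in a..b, Real.exp (-l * x) * Pibar x := hcomp
      _ = ∫ x in Set.Ioc a b, Real.exp (-l * x) * Pibar x := hIocInterval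
      _ ≤ ∫ x in Set.Ioi (0:ℝ), Real.exp (-l * x) * Pibar x := hmono2
  calc 3 * Real.exp (-1) * c / 8
      = (Real.log l) ^ 2 * (Real.exp (-1) * c * (3 / (8 * (Real.log l) ^ 2))) := by
        field_simp
    _ ≤ (Real.log l) ^ 2 * (Φ l / l) :=
        mul_le_mul_of_nonneg_left hfinal (by positivity)
end
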